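/- arXiv:math/0403003 — 2 statements merged into one kernel-verified Lean document; each statement's English description precedes it below -/
import Mathlib

section
/- Let ∇ = {∇^i : i ∈ I} be a finite exceptional set in a k-linear triangulated category D of finite type. Then the dual exceptional set exists: there are objects Δ_i, i ∈ I, satisfying Hom^•(Δ_n, ∇^i) = 0 for n > i and Δ_n ≅ ∇^n modulo the triangulated subcategory generated by {∇^j : j < n}. -/
open CategoryTheory Limits Pretriangulated

universe v u

variable (k : Type*) [Field k]

variable (D : Type u) [Category.{v} D] [Preadditive D] [CategoryTheory.Linear k D]
  [HasZeroObject D] [HasShift D ℤ] [∀ n : ℤ, (shiftFunctor D n).Additive]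
  [Pretriangulated D]

/-- `D` is of finite type over `k`: `⊕ₙ Hom(X, Y⟦n⟧)` is finite dimensional. -/
def FiniteType : Prop :=
  (∀ X Y : D, ∀ n : ℤ, FiniteDimensional k (X ⟶ (Y⟦n⟧ : D))) ∧
    ∀ X Y : D, ∃ N : ℕ, ∀ n : ℤ, (N : ℤ) < |n| → ∀ f : X ⟶ (Y⟦n⟧ : D), f = 0

/-- An ordered family `E : I → D` is an exceptional set: `Hom^•(E i, E j) = 0` for
`i < j`, `Hom^n(E i, E i) = 0` for `n ≠ 0`, and `End (E i) = k`. -/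
def IsExceptional {I : Type*} (lt : I → I → Prop) (E : I → D) : Prop :=
  (∀ i j, lt i j → ∀ n : ℤ, ∀ f : E i ⟶ ((E j)⟦n⟧ : D), f = 0) ∧
  (∀ i, ∀ n : ℤ, n ≠ 0 → ∀ f : E i ⟶ ((E i)⟦n⟧ : D), f = 0) ∧
  (∀ i (f : E i ⟶ E i), ∃ c : k, f = c • 𝟙 (E i))

/-- Closure conditions for a strictly full triangulated subcategory. -/
structure IsTriangulatedSub (S : Set D) : Prop where
  zero_mem : ∀ Z : D, Limits.IsZero Z → Z ∈ S
  iso_closed : ∀ ⦃X Y : D⦄, (X ≅ Y) → X ∈ S → Y ∈ S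
  shift_mem : ∀ (X : D) (n : ℤ), X ∈ S → (X⟦n⟧ : D) ∈ S
  ext_mem : ∀ (T : Triangle D), T ∈ (distTriang D) → T.obj₁ ∈ S → T.obj₃ ∈ S → T.obj₂ ∈ S

/-- The full triangulated subcategory generated by a set of objects. -/
def genTriang (S : Set D) : Set D :=
  ⋂₀ {T : Set D | IsTriangulatedSub D T ∧ S ⊆ T}

/-- `X ≅ Y mod C`: the images of `X` and `Y` in the Verdier quotient `D/C` are
isomorphic; concretely, there is a morphism `X ⟶ Y` whose cone lies in `C`. -/
def IsoModulo (S : Set D) (X Y : D) : Prop :=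
  ∃ (f : X ⟶ Y) (Z : D) (g : Y ⟶ Z) (h : Z ⟶ (X⟦(1:ℤ)⟧ : D)),
    Z ∈ S ∧ Triangle.mk f g h ∈ (distTriang D)

/-- Right orthogonal of a set of objects. -/
def rightOrth (S : Set D) : Set D := {Y | ∀ (A : D), A ∈ S → ∀ f : A ⟶ Y, f = 0}

section DualHelpers

open ZeroObject

set_option linter.unusedSectionVars false
set_option maxHeartbeats 1600000

variable {k D}

/-- If `Hom(A, B⟦q-m⟧) = 0` then `Hom(A⟦m⟧, B⟦q⟧) = 0`. -/
lemma hom_shift_vanish' {A B : D} (m q : ℤ)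
    (h : ∀ f : A ⟶ (B⟦q - m⟧ : D), f = 0) (f : (A⟦m⟧ : D) ⟶ (B⟦q⟧ : D)) : f = 0 := by
  have h0 : (shiftFunctorCompIsoId D m (-m) (by omega)).inv.app A ≫
      (shiftFunctor D (-m)).map f ≫
      (shiftFunctorAdd' D q (-m) (q - m) (by omega)).inv.app B = 0 := h _
  have h1 : (shiftFunctor D (-m)).map f ≫
      (shiftFunctorAdd' D q (-m) (q - m) (by omega)).inv.app B = 0 := by
    have := congrArg (fun z => (shiftFunctorCompIsoId D m (-m) (by omega)).hom.app A ≫ z) h0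
    simpa using this
  have h2 : (shiftFunctor D (-m)).map f = 0 := by
    have := congrArg (fun z => z ≫ (shiftFunctorAdd' D q (-m) (q - m) (by omega)).hom.app B) h1
    simpa using this
  apply (shiftFunctor D (-m)).map_injective
  rw [h2, Functor.map_zero]

/-- Factorisations through `g` extend to shifts (by one) of the source. -/
lemma surj_shift_one {F G A : D} (g : F ⟶ G)
    (hs : ∀ p : ℤ, ∀ f : F ⟶ (A⟦p⟧ : D), ∃ π : G ⟶ (A⟦p⟧ : D), f = g ≫ π)
    (q : ℤ) (θ : (F⟦(1:ℤ)⟧ : D) ⟶ (A⟦q⟧ : D)) :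
    ∃ ρ : (G⟦(1:ℤ)⟧ : D) ⟶ (A⟦q⟧ : D), θ = (shiftFunctor D (1:ℤ)).map g ≫ ρ := by
  obtain ⟨π, hπ⟩ := hs (q - 1)
    ((shiftFunctorCompIsoId D 1 (-1) (by omega)).inv.app F ≫
      (shiftFunctor D (-1:ℤ)).map θ ≫
      (shiftFunctorAdd' D q (-1) (q - 1) (by omega)).inv.app A)
  obtain ⟨ρ, hρ⟩ := (shiftFunctor D (-1:ℤ)).map_surjective
    ((shiftFunctorCompIsoId D 1 (-1) (by omega)).hom.app G ≫ π ≫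
      (shiftFunctorAdd' D q (-1) (q - 1) (by omega)).hom.app A)
  refine ⟨ρ, (shiftFunctor D (-1:ℤ)).map_injective ?_⟩
  rw [Functor.map_comp, hρ]
  -- from hπ : ι.inv.app F ≫ θ⟦-1⟧ ≫ κ.inv.app A = g ≫ π
  have hθ : (shiftFunctor D (-1:ℤ)).map θ =
      (shiftFunctorCompIsoId D 1 (-1) (by omega)).hom.app F ≫ (g ≫ π) ≫
        (shiftFunctorAdd' D q (-1) (q - 1) (by omega)).hom.app A := by
    rw [← hπ]
    simp
  rw [hθ]
  have hnat : (shiftFunctorCompIsoId D 1 (-1) (by omega)).hom.app F ≫ g =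
      (shiftFunctor D (-1:ℤ)).map ((shiftFunctor D (1:ℤ)).map g) ≫
        (shiftFunctorCompIsoId D 1 (-1) (by omega)).hom.app G := by
    have := (shiftFunctorCompIsoId D 1 (-1) (by omega)).hom.naturality g
    simpa using this.symm
  rw [← Category.assoc, ← Category.assoc, hnat]
  simp

/-- Precomposition with an iso is bijective on hom-sets. -/
lemma iso_precomp_bij {Y Z : D} (a : Y ≅ Z) (C' : D) :
    Function.Bijective (fun x : Z ⟶ C' => a.hom ≫ x) := by
  constructor
  · intro x y hxy
    simpa using congrArg (fun z => a.inv ≫ z) hxy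
  · intro x
    exact ⟨a.inv ≫ x, by simp⟩


/-- Every nonzero endomorphism of a shift of an exceptional object is invertible. -/
lemma end_shift_div {Ai : D} (hend : ∀ f : Ai ⟶ Ai, ∃ c : k, f = c • 𝟙 Ai)
    (q : ℤ) (ψ : (Ai⟦q⟧ : D) ⟶ (Ai⟦q⟧ : D)) (hψ : ψ ≠ 0) :
    ∃ χ : (Ai⟦q⟧ : D) ⟶ (Ai⟦q⟧ : D), ψ ≫ χ = 𝟙 _ ∧ χ ≫ ψ = 𝟙 _ := by
  obtain ⟨ψ₀, hψ₀⟩ := (shiftFunctor D q).map_surjective ψ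
  obtain ⟨c, hc⟩ := hend ψ₀
  have hcne : c ≠ 0 := by
    rintro rfl
    apply hψ
    rw [← hψ₀, hc, zero_smul, Functor.map_zero]
  refine ⟨(shiftFunctor D q).map (c⁻¹ • 𝟙 Ai), ?_, ?_⟩
  · rw [← hψ₀, ← Functor.map_comp, hc, Linear.smul_comp, Linear.comp_smul, smul_smul,
      mul_inv_cancel₀ hcne, Category.comp_id, one_smul, CategoryTheory.Functor.map_id]
  · rw [← hψ₀, ← Functor.map_comp, hc, Linear.smul_comp, Linear.comp_smul, smul_smul,
      Category.id_comp, inv_mul_cancel₀ hcne, one_smul, CategoryTheory.Functor.map_id]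

/-- A finite "basis over the endomorphism division ring" for `Hom(F, Ai⟦q⟧)`. -/
lemma block_exists {Ai : D} (hend : ∀ f : Ai ⟶ Ai, ∃ c : k, f = c • 𝟙 Ai)
    (F : D) (q : ℤ) (hfd : FiniteDimensional k (F ⟶ (Ai⟦q⟧ : D))) :
    ∃ (r : ℕ) (φ : Fin r → (F ⟶ (Ai⟦q⟧ : D))),
      (∀ f : F ⟶ (Ai⟦q⟧ : D), ∃ ψ : Fin r → ((Ai⟦q⟧ : D) ⟶ (Ai⟦q⟧ : D)),
        f = ∑ α, φ α ≫ ψ α) ∧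
      (∀ ψ : Fin r → ((Ai⟦q⟧ : D) ⟶ (Ai⟦q⟧ : D)),
        (∑ α, φ α ≫ ψ α) = 0 → ∀ α, ψ α = 0) := by
  classical
  -- a finite spanning family exists
  obtain ⟨r₀, s, hs⟩ := Module.Finite.exists_fin (R := k) (M := (F ⟶ (Ai⟦q⟧ : D)))
  have hsurj₀ : ∀ f : F ⟶ (Ai⟦q⟧ : D), ∃ ψ : Fin r₀ → ((Ai⟦q⟧ : D) ⟶ (Ai⟦q⟧ : D)),
      f = ∑ α, s α ≫ ψ α := by
    intro f
    have hf : f ∈ Submodule.span k (Set.range s) := by rw [hs]; trivial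
    obtain ⟨c, hc⟩ := (Finsupp.mem_span_range_iff_exists_finsupp).1 hf
    refine ⟨fun α => (c α) • 𝟙 _, ?_⟩
    rw [← hc]
    rw [Finsupp.sum_fintype]
    · apply Finset.sum_congr rfl
      intro α _
      rw [Linear.comp_smul, Category.comp_id]
    · intro i; rw [zero_smul]
  -- take a family of minimal length
  suffices H : ∀ (r : ℕ) (φ : Fin r → (F ⟶ (Ai⟦q⟧ : D))),
      (∀ f : F ⟶ (Ai⟦q⟧ : D), ∃ ψ : Fin r → ((Ai⟦q⟧ : D) ⟶ (Ai⟦q⟧ : D)),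
        f = ∑ α, φ α ≫ ψ α) →
      ∃ (r' : ℕ) (φ' : Fin r' → (F ⟶ (Ai⟦q⟧ : D))),
        (∀ f : F ⟶ (Ai⟦q⟧ : D), ∃ ψ : Fin r' → ((Ai⟦q⟧ : D) ⟶ (Ai⟦q⟧ : D)),
          f = ∑ α, φ' α ≫ ψ α) ∧
        (∀ ψ : Fin r' → ((Ai⟦q⟧ : D) ⟶ (Ai⟦q⟧ : D)),
          (∑ α, φ' α ≫ ψ α) = 0 → ∀ α, ψ α = 0) by
    exact H r₀ s hsurj₀
  intro r
  induction r using Nat.strong_induction_on with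
  | _ r ih =>
    intro φ hφ
    by_cases hinj : ∀ ψ : Fin r → ((Ai⟦q⟧ : D) ⟶ (Ai⟦q⟧ : D)),
        (∑ α, φ α ≫ ψ α) = 0 → ∀ α, ψ α = 0
    · exact ⟨r, φ, hφ, hinj⟩
    · push_neg at hinj
      obtain ⟨ψ, hψ0, β, hβ⟩ := hinj
      obtain ⟨χ, hχ₁, hχ₂⟩ := end_shift_div hend q (ψ β) hβ
      -- r = r' + 1
      rcases r with - | r'
      · exact absurd (Fin.elim0 β) id
      have hβeq : φ β = -∑ t : Fin r', (φ (β.succAbove t) ≫ ψ (β.succAbove t)) ≫ χ := by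
        have hsum : φ β ≫ ψ β + ∑ t : Fin r', φ (β.succAbove t) ≫ ψ (β.succAbove t) = 0 :=
          (Fin.sum_univ_succAbove (fun α => φ α ≫ ψ α) β).symm.trans hψ0
        have h1 : φ β ≫ ψ β = -∑ t : Fin r', φ (β.succAbove t) ≫ ψ (β.succAbove t) :=
          eq_neg_of_add_eq_zero_left hsum
        calc φ β = (φ β ≫ ψ β) ≫ χ := by rw [Category.assoc, hχ₁, Category.comp_id]
        _ = -∑ t : Fin r', (φ (β.succAbove t) ≫ ψ (β.succAbove t)) ≫ χ := by
            rw [h1, Preadditive.neg_comp, Preadditive.sum_comp]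
      refine ih r' (Nat.lt_succ_self r') (fun t => φ (β.succAbove t)) ?_
      intro f
      obtain ⟨ψ', hψ'⟩ := hφ f
      refine ⟨fun t => ψ' (β.succAbove t) - ψ (β.succAbove t) ≫ χ ≫ ψ' β, ?_⟩
      rw [hψ', Fin.sum_univ_succAbove (fun α => φ α ≫ ψ' α) β, hβeq]
      simp only [Preadditive.comp_sub, Preadditive.neg_comp, Preadditive.sum_comp,
        Category.assoc, Finset.sum_sub_distrib]
      abel

lemma G_exists (Ai : D)
    (hend : ∀ f : Ai ⟶ Ai, ∃ c : k, f = c • 𝟙 Ai)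
    (hvan : ∀ p : ℤ, p ≠ 0 → ∀ f : Ai ⟶ (Ai⟦p⟧ : D), f = 0)
    (F : D)
    (hfd : ∀ q : ℤ, FiniteDimensional k (F ⟶ (Ai⟦q⟧ : D)))
    (N : ℕ) (hN : ∀ q : ℤ, (N : ℤ) < |q| → ∀ f : F ⟶ (Ai⟦q⟧ : D), f = 0) :
    ∃ (G : D) (g : F ⟶ G),
      (∀ (P : Set D), IsTriangulatedSub D P → (∀ p : ℤ, (Ai⟦p⟧ : D) ∈ P) → G ∈ P) ∧
      (∀ (Bb : D), (∀ p : ℤ, ∀ f : Ai ⟶ (Bb⟦p⟧ : D), f = 0) →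
        ∀ q : ℤ, ∀ f : G ⟶ ((Bb)⟦q⟧ : D), f = 0) ∧
      (∀ q : ℤ, ∀ f : F ⟶ (Ai⟦q⟧ : D), ∃ π : G ⟶ (Ai⟦q⟧ : D), f = g ≫ π) ∧
      (∀ q : ℤ, ∀ π : G ⟶ (Ai⟦q⟧ : D), g ≫ π = 0 → π = 0) := by
  classical
  choose r φ hsurj hinj using
    fun p : {x // x ∈ Finset.Icc (-(N : ℤ)) (N : ℤ)} => block_exists hend F (p : ℤ) (hfd _)
  let T := Σ p : {x // x ∈ Finset.Icc (-(N : ℤ)) (N : ℤ)}, Fin (r p)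
  let fam : T → D := fun t => (Ai⟦(t.1 : ℤ)⟧ : D)
  refine ⟨⨁ fam, biproduct.lift fun t => φ t.1 t.2, ?_, ?_, ?_, ?_⟩
  · -- membership
    intro P hP hPA
    have memFin : ∀ (nn : ℕ) (fam' : Fin nn → D), (∀ t, fam' t ∈ P) → (⨁ fam') ∈ P := by
      intro nn
      induction nn with
      | zero =>
        intro fam' _
        refine hP.zero_mem _ ?_
        rw [IsZero.iff_id_eq_zero]
        apply biproduct.hom_ext
        intro j; exact j.elim0
      | succ nn ih =>
        intro fam' hfam'
        have h1 : (fam' 0 ⊞ ⨁ fun t : Fin nn => fam' t.succ) ∈ P :=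
          hP.ext_mem _
            (binaryBiproductTriangle_distinguished (fam' 0) (⨁ fun t : Fin nn => fam' t.succ))
            (hfam' 0) (ih _ fun t => hfam' t.succ)
        refine hP.iso_closed ?_ h1
        refine ⟨biprod.desc (biproduct.ι fam' 0) (biproduct.desc fun t => biproduct.ι fam' t.succ),
          biprod.lift (biproduct.π fam' 0) (biproduct.lift fun t => biproduct.π fam' t.succ),
          ?_, ?_⟩
        · apply biprod.hom_ext'
          · apply biprod.hom_ext
            · simp
            · apply biproduct.hom_ext; intro j
              simp [biproduct.ι_π, (Fin.succ_ne_zero j).symm]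
          · apply biprod.hom_ext
            · apply biproduct.hom_ext'; intro j
              simp [biproduct.ι_π_ne _ (Fin.succ_ne_zero j)]
            · apply biproduct.hom_ext'; intro j
              apply biproduct.hom_ext; intro l
              by_cases hjl : j = l
              · subst hjl; simp
              · simp [biproduct.ι_π_ne _ hjl,
                  biproduct.ι_π_ne _ (fun h => hjl (Fin.succ_injective _ h))]
        · rw [biprod.lift_desc, biproduct.lift_desc,
            ← Fin.sum_univ_succ (fun j => biproduct.π fam' j ≫ biproduct.ι fam' j)]
          exact biproduct.total
    have hmem : (⨁ fun s : Fin (Fintype.card T) => fam ((Fintype.equivFin T).symm s)) ∈ P :=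
      memFin _ _ (fun t => hPA _)
    exact hP.iso_closed
      (biproduct.whiskerEquiv (Fintype.equivFin T)
        (fun j => eqToIso (by rw [Equiv.symm_apply_apply]))).symm hmem
  · -- GZero
    intro Bb hBb q f
    apply biproduct.hom_ext'
    intro t
    rw [comp_zero]
    exact hom_shift_vanish' (t.1 : ℤ) q (hBb (q - (t.1 : ℤ))) (biproduct.ι fam t ≫ f)
  · -- GSurj
    intro q f
    by_cases hq : q ∈ Finset.Icc (-(N : ℤ)) (N : ℤ)
    · obtain ⟨ψ, hψ⟩ := hsurj ⟨q, hq⟩ f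
      refine ⟨biproduct.desc fun t =>
        if h : t.1 = (⟨q, hq⟩ : {x // x ∈ Finset.Icc (-(N : ℤ)) (N : ℤ)}) then
          eqToHom (congrArg (fun z : {x // x ∈ Finset.Icc (-(N : ℤ)) (N : ℤ)} =>
            ((Ai⟦(z : ℤ)⟧ : D))) h) ≫ ψ (Fin.cast (by rw [h]) t.2) else 0, ?_⟩
      rw [biproduct.lift_desc, ← Finset.univ_sigma_univ, Finset.sum_sigma]
      rw [Finset.sum_eq_single (⟨q, hq⟩ : {x // x ∈ Finset.Icc (-(N : ℤ)) (N : ℤ)})]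
      · rw [hψ]
        apply Finset.sum_congr rfl
        intro α _
        rw [dif_pos rfl]
        simp
      · intro p _ hp
        apply Finset.sum_eq_zero; intro α _
        rw [dif_neg hp, comp_zero]
      · intro h; exact absurd (Finset.mem_univ _) h
    · have habs : (N : ℤ) < |q| := by
        rw [Finset.mem_Icc] at hq
        rcases abs_cases q with ⟨h1, h2⟩ | ⟨h1, h2⟩ <;> omega
      refine ⟨0, ?_⟩
      rw [comp_zero]
      exact hN q habs f
  · -- GInj
    intro q π hπ
    by_cases hq : q ∈ Finset.Icc (-(N : ℤ)) (N : ℤ)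
    · have hcomp : ∀ α : Fin (r ⟨q, hq⟩),
          biproduct.ι fam ⟨⟨q, hq⟩, α⟩ ≫ π = 0 := by
        apply hinj ⟨q, hq⟩
        have hdesc : π = biproduct.desc (fun t => biproduct.ι fam t ≫ π) := by
          apply biproduct.hom_ext'; intro t; simp
        have hexp : (biproduct.lift fun t : T => φ t.1 t.2) ≫ π
            = ∑ t : T, φ t.1 t.2 ≫ (biproduct.ι fam t ≫ π) := by
          conv_lhs => rw [hdesc]
          rw [biproduct.lift_desc]
        rw [hexp] at hπ
        rw [← Finset.univ_sigma_univ, Finset.sum_sigma] at hπ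
        rw [Finset.sum_eq_single (⟨q, hq⟩ : {x // x ∈ Finset.Icc (-(N : ℤ)) (N : ℤ)})] at hπ
        · exact hπ
        · intro p _ hp
          apply Finset.sum_eq_zero; intro α _
          have hz : biproduct.ι fam ⟨p, α⟩ ≫ π = 0 := by
            apply hom_shift_vanish' (p : ℤ) q
            apply hvan
            intro hc
            exact hp (Subtype.ext (show (p : ℤ) = q by omega))
          rw [hz, comp_zero]
        · intro h; exact absurd (Finset.mem_univ _) h
      apply biproduct.hom_ext'
      rintro ⟨p, α⟩
      rw [comp_zero]
      by_cases hp : p = (⟨q, hq⟩ : {x // x ∈ Finset.Icc (-(N : ℤ)) (N : ℤ)})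
      · subst hp; exact hcomp α
      · apply hom_shift_vanish' (p : ℤ) q
        apply hvan
        intro hc
        exact hp (Subtype.ext (show (p : ℤ) = q by omega))
    · apply biproduct.hom_ext'
      rintro ⟨p, α⟩
      rw [comp_zero]
      apply hom_shift_vanish' (p : ℤ) q
      apply hvan
      intro hc
      have := p.2
      rw [Finset.mem_Icc] at this hq
      omega


end DualHelpers

open ZeroObject in
set_option maxHeartbeats 3200000 in
/- STATEMENT 3: every finite exceptional set `∇ = {∇^i, i ∈ I}` in a k-linear
triangulated category of finite type admits a dual set `Δ`: `Hom^•(Δ_n, ∇^i) = 0`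
for `n > i`, and `Δ_n ≅ ∇^n` modulo the triangulated subcategory generated by the
`∇^j` with `j < n`. -/
theorem stmt3 {I : Type*} [LinearOrder I] [Fintype I]
    (hft : FiniteType k D)
    (E : I → D) (hE : IsExceptional k D (· < ·) E) :
    ∃ Δ : I → D,
      (∀ n i : I, i < n → ∀ m : ℤ, ∀ f : Δ n ⟶ ((E i)⟦m⟧ : D), f = 0) ∧
      (∀ n : I, IsoModulo D (genTriang D {X | ∃ j, j < n ∧ X = E j}) (Δ n) (E n)) := by
  classical
  have main : ∀ n : I, ∃ Δn : D,
      (∀ i : I, i < n → ∀ m : ℤ, ∀ f : Δn ⟶ ((E i)⟦m⟧ : D), f = 0) ∧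
      IsoModulo D (genTriang D {X | ∃ j, j < n ∧ X = E j}) Δn (E n) := by
    intro n
    set S : Set D := genTriang D {X | ∃ j, j < n ∧ X = E j} with hSdef
    have hS : IsTriangulatedSub D S := by
      constructor
      · exact fun Z hZ Tset hT => hT.1.zero_mem Z hZ
      · exact fun X Y e hX Tset hT => hT.1.iso_closed e (hX Tset hT)
      · exact fun X mm hX Tset hT => hT.1.shift_mem X mm (hX Tset hT)
      · exact fun T hdist h1 h3 Tset hT => hT.1.ext_mem T hdist (h1 Tset hT) (h3 Tset hT)
    have hgen : ∀ j : I, j < n → E j ∈ S := by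
      intro j hj Tset hT
      exact hT.2 ⟨j, hj, rfl⟩
    have hproc : ∀ (NN : ℕ) (s : Finset I), s.card ≤ NN → (∀ j ∈ s, j < n) →
        ∃ (F B : D) (u : F ⟶ E n) (v : E n ⟶ B) (w : B ⟶ (F⟦(1:ℤ)⟧ : D)),
          (Triangle.mk u v w ∈ (distTriang D)) ∧ (B ∈ S) ∧
          ∀ j ∈ s, ∀ p : ℤ,
            Function.Bijective (fun ψ : B ⟶ ((E j)⟦p⟧ : D) => v ≫ ψ) := by
      intro NN
      induction NN with
      | zero =>
        intro s hcard _
        have hs0 : s = ∅ := Finset.card_eq_zero.1 (Nat.le_zero.1 hcard)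
        subst hs0
        refine ⟨E n, 0, 𝟙 (E n), 0, 0, contractible_distinguished (E n),
          hS.zero_mem _ (isZero_zero D), by simp⟩
      | succ NN ih =>
        intro s hcard hsn
        rcases s.eq_empty_or_nonempty with rfl | hne
        · exact ih ∅ (by simp) (by simp)
        set i := s.min' hne with hidef
        have his : i ∈ s := s.min'_mem hne
        have hin : i < n := hsn i his
        obtain ⟨F, B, u, v, w, hT1, hB, hbij⟩ := ih (s.erase i)
          (by rw [Finset.card_erase_of_mem his]; omega)
          (fun j hj => hsn j (Finset.mem_of_mem_erase hj))
        obtain ⟨N₂, hN₂⟩ := hft.2 F (E i)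
        obtain ⟨G, g, hGmem, hGzero, hGsurj, hGinj⟩ :=
          G_exists (E i) (hE.2.2 i) (hE.2.1 i) F (fun q => hft.1 F (E i) q) N₂ hN₂
        set T : Triangle D := Triangle.mk u v w with hTdef
        have hT' : T.invRotate ∈ distTriang D := inv_rot_of_distTriang _ hT1
        obtain ⟨Q, jm, h, hT₀⟩ := distinguished_cocone_triangle (T.invRotate.mor₁ ≫ g)
        obtain ⟨c₀, hc₁, hc₂⟩ := complete_distinguished_triangle_morphism
          T.invRotate (Triangle.mk (T.invRotate.mor₁ ≫ g) jm h) hT' hT₀ (𝟙 _) g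
          (Category.id_comp _).symm
        let c : E n ⟶ Q := c₀
        have hcc : c = c₀ := rfl
        have hA1 : u ≫ c = g ≫ jm := hc₁
        have hA2 : T.invRotate.mor₃ = c ≫ h := by rw [hcc]; erw [CategoryTheory.Functor.map_id, Category.comp_id] at hc₂; exact hc₂
        have hA3 : T.invRotate.mor₁ ≫ u = 0 := comp_distTriang_mor_zero₁₂ _ hT'
        -- transfer of bijectivity along the canonical iso B ≅ B⟦-1⟧⟦1⟧
        have hbijσ : ∀ j ∈ s.erase i, ∀ p : ℤ,
            Function.Bijective (fun ψ : ((B⟦(-1:ℤ)⟧)⟦(1:ℤ)⟧ : D) ⟶ ((E j)⟦p⟧ : D) =>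
              T.invRotate.mor₃ ≫ ψ) := by
          intro j hj p
          have heq : (fun ψ : ((B⟦(-1:ℤ)⟧)⟦(1:ℤ)⟧ : D) ⟶ ((E j)⟦p⟧ : D) =>
              T.invRotate.mor₃ ≫ ψ)
              = (fun χ : B ⟶ ((E j)⟦p⟧ : D) => v ≫ χ) ∘
                (fun ψ => ((shiftEquiv D (1:ℤ)).counitIso.app B).symm.hom ≫ ψ) := by
            funext ψ
            show T.invRotate.mor₃ ≫ ψ = v ≫ (((shiftEquiv D (1:ℤ)).counitIso.app B).symm.hom ≫ ψ)
            erw [← Category.assoc]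
            rfl
          rw [heq]
          exact (hbij j hj p).comp (iso_precomp_bij _ _)
        obtain ⟨F₂, u₂, w₂, hT₂⟩ := distinguished_cocone_triangle₁ c
        have hQ : Q ∈ S := by
          apply hS.ext_mem _ (rot_of_distTriang _ hT₀)
          · exact hGmem S hS (fun p => hS.shift_mem _ p (hgen i hin))
          · exact hS.shift_mem _ 1 (hS.shift_mem _ (-1) hB)
        refine ⟨F₂, Q, u₂, c, w₂, hT₂, hQ, ?_⟩
        intro j hjs p
        by_cases hji : j = i
        · subst hji
          constructor
          · -- injective at the new index
            intro ψ₁ ψ₂ heq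
            have h0 : c ≫ (ψ₁ - ψ₂) = 0 := by
              rw [Preadditive.comp_sub, show c ≫ ψ₁ = c ≫ ψ₂ from heq, sub_self]
            have hjψ : jm ≫ (ψ₁ - ψ₂) = 0 := by
              apply hGinj p
              rw [← Category.assoc, ← hA1, Category.assoc, h0, comp_zero]
            obtain ⟨χ', hχ'⟩ := Triangle.yoneda_exact₃ _ hT₀ (ψ₁ - ψ₂) hjψ
            have hχ'' : ψ₁ - ψ₂ = h ≫ χ' := hχ'
            have hvχ : T.invRotate.mor₃ ≫ χ' = 0 := by
              erw [hA2, Category.assoc, ← hχ'', h0]; rfl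
            obtain ⟨θ, hθ⟩ := Triangle.yoneda_exact₃ T.invRotate.rotate
              (rot_of_distTriang _ hT') χ' hvχ
            simp only [Triangle.rotate_mor₃] at hθ
            obtain ⟨ρ, hρ⟩ := surj_shift_one g hGsurj p θ
            rw [hρ] at hθ
            have hze : h ≫ (shiftFunctor D (1:ℤ)).map (T.invRotate.mor₁ ≫ g) = 0 :=
              comp_distTriang_mor_zero₃₁ _ hT₀
            have hze2 : (h ≫ (shiftFunctor D (1:ℤ)).map (T.invRotate.mor₁ ≫ g)) ≫ ρ = 0 := by
              rw [hze, zero_comp]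
            have hsub : ψ₁ - ψ₂ = 0 := by
              rw [hχ'', hθ]
              erw [Preadditive.neg_comp, Preadditive.comp_neg, ← CategoryTheory.Functor.map_comp_assoc, ← Category.assoc, hze2, neg_zero]
            exact sub_eq_zero.1 hsub
          · -- surjective at the new index
            intro f
            obtain ⟨π, hπ⟩ := hGsurj p (u ≫ f)
            have hepi : (T.invRotate.mor₁ ≫ g) ≫ π = 0 := by
              erw [Category.assoc, ← hπ, ← Category.assoc, hA3, zero_comp]
            obtain ⟨ψ₀0, hψ₀⟩ := Triangle.yoneda_exact₂ _ hT₀ π hepi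
            let ψ₀ : Q ⟶ ((E i)⟦p⟧ : D) := ψ₀0
            have hψ₀' : π = jm ≫ ψ₀ := hψ₀
            have hoff : u ≫ (f - c ≫ ψ₀) = 0 := by
              rw [Preadditive.comp_sub, ← Category.assoc, hA1, Category.assoc, ← hψ₀', ← hπ,
                sub_self]
            obtain ⟨χ, hχ⟩ := Triangle.yoneda_exact₃ T.invRotate hT' (f - c ≫ ψ₀) hoff
            refine ⟨ψ₀ + h ≫ χ, ?_⟩
            show c ≫ (ψ₀ + h ≫ χ) = f
            erw [Preadditive.comp_add, ← Category.assoc, ← hA2, ← hχ]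
            abel
        · -- previously handled indices
          have hj' : j ∈ s.erase i := Finset.mem_erase.2 ⟨hji, hjs⟩
          have hij : i < j := lt_of_le_of_ne (s.min'_le j hjs) (fun hh => hji hh.symm)
          have hzero : ∀ qq : ℤ, ∀ f0 : G ⟶ ((E j)⟦qq⟧ : D), f0 = 0 :=
            hGzero (E j) (hE.1 i j hij)
          constructor
          · intro ψ₁ ψ₂ heq
            have h0 : c ≫ (ψ₁ - ψ₂) = 0 := by
              rw [Preadditive.comp_sub, show c ≫ ψ₁ = c ≫ ψ₂ from heq, sub_self]
            have hjψ : jm ≫ (ψ₁ - ψ₂) = 0 := hzero p _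
            obtain ⟨χ, hχ⟩ := Triangle.yoneda_exact₃ _ hT₀ (ψ₁ - ψ₂) hjψ
            have hχ2 : ψ₁ - ψ₂ = h ≫ χ := hχ
            have hvχ : T.invRotate.mor₃ ≫ χ = 0 := by
              erw [hA2, Category.assoc, ← hχ2, h0]; rfl
            have hχ0 : χ = 0 := by
              apply (hbijσ j hj' p).injective
              show T.invRotate.mor₃ ≫ χ = T.invRotate.mor₃ ≫ 0
              rw [hvχ, comp_zero]
            have : ψ₁ - ψ₂ = 0 := by erw [hχ2, hχ0, comp_zero]
            exact sub_eq_zero.1 this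
          · intro f
            obtain ⟨x, hx⟩ := (hbijσ j hj' p).surjective f
            have hx' : T.invRotate.mor₃ ≫ x = f := hx
            refine ⟨h ≫ x, ?_⟩
            show c ≫ h ≫ x = f
            erw [← Category.assoc, ← hA2, hx']
    -- final extraction
    obtain ⟨F, B, u, v, w, hT1, hB, hbij⟩ :=
      hproc (Finset.univ.filter (fun j => j < n)).card (Finset.univ.filter (fun j => j < n))
        le_rfl (by intro j hj; exact (Finset.mem_filter.1 hj).2)
    have hbij' : ∀ j : I, j < n → ∀ p : ℤ,
        Function.Bijective (fun ψ : B ⟶ ((E j)⟦p⟧ : D) => v ≫ ψ) :=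
      fun j hj p => hbij j (Finset.mem_filter.2 ⟨Finset.mem_univ j, hj⟩) p
    refine ⟨F, ?_, u, B, v, w, hB, hT1⟩
    intro i hi m φ
    set T : Triangle D := Triangle.mk u v w with hTdef
    have hT' : T.invRotate ∈ distTriang D := inv_rot_of_distTriang _ hT1
    have hbijσfin : ∀ p : ℤ, Function.Bijective
        (fun ψ : ((B⟦(-1:ℤ)⟧)⟦(1:ℤ)⟧ : D) ⟶ ((E i)⟦p⟧ : D) => T.invRotate.mor₃ ≫ ψ) := by
      intro p
      have heq : (fun ψ : ((B⟦(-1:ℤ)⟧)⟦(1:ℤ)⟧ : D) ⟶ ((E i)⟦p⟧ : D) =>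
          T.invRotate.mor₃ ≫ ψ)
          = (fun χ : B ⟶ ((E i)⟦p⟧ : D) => v ≫ χ) ∘
            (fun ψ => ((shiftEquiv D (1:ℤ)).counitIso.app B).symm.hom ≫ ψ) := by
        funext ψ
        show T.invRotate.mor₃ ≫ ψ = v ≫ (((shiftEquiv D (1:ℤ)).counitIso.app B).symm.hom ≫ ψ)
        erw [← Category.assoc]
        rfl
      rw [heq]
      exact (hbij' i hi p).comp (iso_precomp_bij _ _)
    have hst : T.invRotate.mor₃ ≫ (shiftFunctor D (1:ℤ)).map T.invRotate.mor₁ = 0 := by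
      have h23 : T.invRotate.mor₃ ≫ (-(shiftFunctor D (1:ℤ)).map T.invRotate.mor₁) = 0 :=
        comp_distTriang_mor_zero₂₃ _ (rot_of_distTriang _ hT')
      erw [Preadditive.comp_neg, neg_eq_zero] at h23; exact h23
    set κ : (((E i)⟦m⟧)⟦(1:ℤ)⟧ : D) ≅ ((E i)⟦m + 1⟧ : D) :=
      ((shiftFunctorAdd' D m (1:ℤ) (m+1) rfl).symm.app (E i)) with hκdef
    have hx1 : (shiftFunctor D (1:ℤ)).map T.invRotate.mor₁ ≫
        ((shiftFunctor D (1:ℤ)).map φ ≫ κ.hom) = 0 := by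
      apply (hbijσfin (m+1)).injective
      show T.invRotate.mor₃ ≫ _ = T.invRotate.mor₃ ≫ 0
      rw [comp_zero, ← Category.assoc, hst, zero_comp]
    have hstep1 : T.invRotate.mor₁ ≫ φ = 0 := by
      apply (shiftFunctor D (1:ℤ)).map_injective
      erw [Functor.map_comp, Functor.map_zero]
      have h2 : ((shiftFunctor D (1:ℤ)).map T.invRotate.mor₁ ≫
          (shiftFunctor D (1:ℤ)).map φ) ≫ κ.hom = 0 ≫ κ.hom := by
        rw [zero_comp, Category.assoc]
        exact hx1
      exact (cancel_mono κ.hom).1 h2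
    obtain ⟨f', hf'⟩ := Triangle.yoneda_exact₂ T.invRotate hT' φ hstep1
    obtain ⟨χ, hχ⟩ := (hbij' i hi m).surjective f'
    have hχ' : v ≫ χ = f' := hχ
    have huv : u ≫ v = 0 := comp_distTriang_mor_zero₁₂ _ hT1
    rw [hf']
    show u ≫ f' = 0
    rw [← hχ', ← Category.assoc, huv, zero_comp]
  choose Δ h1 h2 using main
  exact ⟨Δ, fun n i hi => h1 n i hi, h2⟩
end

section
/- The dual set of an exceptional set, if it exists, is unique up to isomorphism, and the dual set equipped with the opposite ordering is itself an exceptional set. -/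
open CategoryTheory Limits Pretriangulated

universe v u

variable (k : Type*) [Field k]

variable (D : Type u) [Category.{v} D] [Preadditive D] [CategoryTheory.Linear k D]
  [HasZeroObject D] [HasShift D ℤ] [∀ n : ℤ, (shiftFunctor D n).Additive]
  [Pretriangulated D]

section Helpers

set_option linter.unusedSectionVars false

variable {D}

/-- A map into a plain object vanishes if all maps into its shifts vanish. -/
lemma aux_zero_of_vanish {A X : D} (h : ∀ m : ℤ, ∀ f : A ⟶ (X⟦m⟧ : D), f = 0)
    (f : A ⟶ X) : f = 0 := by
  have h0 : f ≫ (shiftFunctorZero D ℤ).inv.app X = 0 := h 0 _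
  rw [show f = (f ≫ (shiftFunctorZero D ℤ).inv.app X) ≫ (shiftFunctorZero D ℤ).hom.app X by simp,
    h0, zero_comp]

/-- Cancellation: a map `A ⟶ T.obj₁` killed by `T.mor₁` factors through `T.obj₃⟦-1⟧`. -/
lemma aux_cancel (T : Triangle D) (hT : T ∈ distTriang D) {A : D} (d : A ⟶ T.obj₁)
    (hd : d ≫ T.mor₁ = 0) (h0 : ∀ e : A ⟶ ((T.obj₃)⟦(-1:ℤ)⟧ : D), e = 0) : d = 0 := by
  obtain ⟨e, he⟩ := Triangle.coyoneda_exact₂ _ (inv_rot_of_distTriang _ hT) d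
    (by dsimp [Triangle.invRotate]; exact hd)
  rw [he, h0 e]; exact zero_comp

/-- Factorization: a map out of `T.obj₁` extends along `T.mor₁` if `Hom(T.obj₃⟦-1⟧, W) = 0`. -/
lemma aux_factor (T : Triangle D) (hT : T ∈ distTriang D) {W : D} (u : T.obj₁ ⟶ W)
    (h0 : ∀ e : ((T.obj₃)⟦(-1:ℤ)⟧ : D) ⟶ W, e = 0) : ∃ v : T.obj₂ ⟶ W, u = T.mor₁ ≫ v :=
  Triangle.yoneda_exact₂ _ (inv_rot_of_distTriang _ hT) u (h0 _)

/-- The covariant vanishing set of `A` is a triangulated subcategory. -/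
lemma aux_vanishFrom_sub (A : D) :
    IsTriangulatedSub D {X | ∀ m : ℤ, ∀ f : A ⟶ (X⟦m⟧ : D), f = 0} where
  zero_mem Z hZ m f := ((shiftFunctor D m).map_isZero hZ).eq_of_tgt f 0
  iso_closed X Y e hX m f := by
    have h0 : f ≫ (shiftFunctor D m).map e.inv = 0 := hX m _
    rw [show f = (f ≫ (shiftFunctor D m).map e.inv) ≫ (shiftFunctor D m).map e.hom by
      simp [← Functor.map_comp], h0, zero_comp]
  shift_mem X n hX m f := by
    have h0 : f ≫ (shiftFunctorAdd' D n m (n+m) rfl).inv.app X = 0 := hX (n+m) _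
    rw [show f = (f ≫ (shiftFunctorAdd' D n m (n+m) rfl).inv.app X) ≫
        (shiftFunctorAdd' D n m (n+m) rfl).hom.app X by simp, h0, zero_comp]
  ext_mem T hT h₁ h₃ m f := by
    have hT' := Triangle.shift_distinguished T hT m
    have hf : f ≫ ((CategoryTheory.shiftFunctor (Triangle D) m).obj T).mor₂ = 0 := h₃ m _
    obtain ⟨g, hg⟩ := Triangle.coyoneda_exact₂ _ hT' f hf
    rw [hg, h₁ m g]; exact zero_comp

/-- The contravariant vanishing set of `B` is a triangulated subcategory. -/
lemma aux_vanishTo_sub (B : D) :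
    IsTriangulatedSub D {X | ∀ m : ℤ, ∀ f : X ⟶ (B⟦m⟧ : D), f = 0} where
  zero_mem Z hZ m f := hZ.eq_of_src f 0
  iso_closed X Y e hX m f := by
    have h0 : e.hom ≫ f = 0 := hX m _
    rw [show f = e.inv ≫ e.hom ≫ f by simp, h0, comp_zero]
  shift_mem X n hX m f := by
    have hg : ((shiftFunctorZero D ℤ).inv.app X ≫
        (shiftFunctorAdd' D n (-n) 0 (by ring)).hom.app X ≫
        (shiftFunctor D (-n)).map f ≫
        (shiftFunctorAdd' D m (-n) (m-n) (by ring)).inv.app B) = 0 := hX (m-n) _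
    have h1 : (shiftFunctor D (-n)).map f = 0 := by
      rw [show (shiftFunctor D (-n)).map f =
        (shiftFunctorAdd' D n (-n) 0 (by ring)).inv.app X ≫ (shiftFunctorZero D ℤ).hom.app X ≫
        ((shiftFunctorZero D ℤ).inv.app X ≫ (shiftFunctorAdd' D n (-n) 0 (by ring)).hom.app X ≫
        (shiftFunctor D (-n)).map f ≫ (shiftFunctorAdd' D m (-n) (m-n) (by ring)).inv.app B) ≫
        (shiftFunctorAdd' D m (-n) (m-n) (by ring)).hom.app B by simp, hg]
      simp
    exact (shiftFunctor D (-n)).map_injective (by rw [h1, Functor.map_zero])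
  ext_mem T hT h₁ h₃ m f := by
    obtain ⟨g, hg⟩ := Triangle.yoneda_exact₂ _ hT f (h₁ m _)
    rw [hg, h₃ m g, comp_zero]

variable (D)

lemma aux_genTriang_sub {S T : Set D} (hT : IsTriangulatedSub D T) (hST : S ⊆ T) :
    genTriang D S ⊆ T := fun _ hX => hX T ⟨hT, hST⟩

lemma aux_genTriang_isSub (S : Set D) : IsTriangulatedSub D (genTriang D S) where
  zero_mem Z hZ T hT := hT.1.zero_mem Z hZ
  iso_closed X Y e hX T hT := hT.1.iso_closed e (hX T hT)
  shift_mem X n hX T hT := hT.1.shift_mem X n (hX T hT)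
  ext_mem T hT h₁ h₃ S' hS' := hS'.1.ext_mem T hT (h₁ S' hS') (h₃ S' hS')

lemma aux_genTriang_self (S : Set D) : S ⊆ genTriang D S := fun _ hX _ hT => hT.2 hX

end Helpers

/- STATEMENT 5: the dual set of an exceptional set, if it exists, is unique up to
isomorphism, and the dual set with the opposite ordering is itself exceptional. -/
theorem stmt5 {I : Type*} [LinearOrder I] [Fintype I]
    (hft : FiniteType k D)
    (E : I → D) (hE : IsExceptional k D (· < ·) E)
    (Δ Δ' : I → D)
    -- both `Δ` and `Δ'` are dual to `E`:
    (hdual₁ : ∀ n i : I, i < n → ∀ m : ℤ, ∀ f : Δ n ⟶ ((E i)⟦m⟧ : D), f = 0)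
    (hdual₂ : ∀ n : I, IsoModulo D (genTriang D {X | ∃ j, j < n ∧ X = E j}) (Δ n) (E n))
    (hdual₁' : ∀ n i : I, i < n → ∀ m : ℤ, ∀ f : Δ' n ⟶ ((E i)⟦m⟧ : D), f = 0)
    (hdual₂' : ∀ n : I, IsoModulo D (genTriang D {X | ∃ j, j < n ∧ X = E j}) (Δ' n) (E n)) :
    -- uniqueness up to isomorphism ...
    (∀ i : I, Nonempty (Δ i ≅ Δ' i)) ∧
    -- ... and `Δ` with the opposite order is an exceptional set
    IsExceptional k D (· > ·) Δ := by
  obtain ⟨hE1, hE2, hE3⟩ := hE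
  -- notation for the generated subcategories
  set G : I → Set D := fun n => genTriang D {X | ∃ j, j < n ∧ X = E j} with hGdef
  have hGsub : ∀ n, IsTriangulatedSub D (G n) := fun n => aux_genTriang_isSub D _
  have hGmono : ∀ ⦃i j : I⦄, j ≤ i → G j ⊆ G i := by
    intro i j hji
    apply aux_genTriang_sub D (hGsub i)
    rintro X ⟨l, hl, rfl⟩
    exact aux_genTriang_self D _ ⟨l, lt_of_lt_of_le hl hji, rfl⟩
  -- vanishing of Hom(Δ n, -) on G n (and same for Δ')
  have F1 : ∀ (n : I) (X : D), X ∈ G n → ∀ m : ℤ, ∀ f : Δ n ⟶ (X⟦m⟧ : D), f = 0 := by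
    intro n
    apply aux_genTriang_sub D (aux_vanishFrom_sub (Δ n))
    rintro X ⟨j, hj, rfl⟩ m f
    exact hdual₁ n j hj m f
  have F1' : ∀ (n : I) (X : D), X ∈ G n → ∀ m : ℤ, ∀ f : Δ' n ⟶ (X⟦m⟧ : D), f = 0 := by
    intro n
    apply aux_genTriang_sub D (aux_vanishFrom_sub (Δ' n))
    rintro X ⟨j, hj, rfl⟩ m f
    exact hdual₁' n j hj m f
  -- vanishing of Hom(-, E n⟦m⟧) on G n
  have F2 : ∀ (n : I) (X : D), X ∈ G n → ∀ m : ℤ, ∀ f : X ⟶ ((E n)⟦m⟧ : D), f = 0 := by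
    intro n
    apply aux_genTriang_sub D (aux_vanishTo_sub (E n))
    rintro X ⟨j, hj, rfl⟩ m f
    exact hE1 j n hj m f
  -- unpack the two triangles
  have hd2 : ∀ n : I, ∃ (f : Δ n ⟶ E n) (Z : D) (g : E n ⟶ Z) (h : Z ⟶ ((Δ n)⟦(1:ℤ)⟧ : D)),
      Z ∈ G n ∧ Triangle.mk f g h ∈ distTriang D := hdual₂
  have hd2' : ∀ n : I, ∃ (f : Δ' n ⟶ E n) (Z : D) (g : E n ⟶ Z) (h : Z ⟶ ((Δ' n)⟦(1:ℤ)⟧ : D)),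
      Z ∈ G n ∧ Triangle.mk f g h ∈ distTriang D := hdual₂'
  choose f Z g h hZ hT using hd2
  choose f' Z' g' h' hZ' hT' using hd2'
  constructor
  · -- uniqueness up to isomorphism
    intro n
    -- construct φ : Δ n ⟶ Δ' n with φ ≫ f' n = f n
    obtain ⟨φ, hφ⟩ := Triangle.coyoneda_exact₂ _ (hT' n) (f n)
      (aux_zero_of_vanish (F1 n (Z' n) (hZ' n)) _)
    obtain ⟨ψ, hψ⟩ := Triangle.coyoneda_exact₂ _ (hT n) (f' n)
      (aux_zero_of_vanish (F1' n (Z n) (hZ n)) _)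
    change Δ n ⟶ Δ' n at φ
    change Δ' n ⟶ Δ n at ψ
    change f n = φ ≫ f' n at hφ
    change f' n = ψ ≫ f n at hψ
    have hφψ : φ ≫ ψ = 𝟙 (Δ n) := by
      rw [← sub_eq_zero]
      apply aux_cancel _ (hT n)
      · show (φ ≫ ψ - 𝟙 (Δ n)) ≫ f n = 0
        rw [Preadditive.sub_comp, Category.assoc, Category.id_comp, ← hψ, ← hφ, sub_self]
      · exact fun e => F1 n (Z n) (hZ n) (-1) e
    have hψφ : ψ ≫ φ = 𝟙 (Δ' n) := by
      rw [← sub_eq_zero]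
      apply aux_cancel _ (hT' n)
      · show (ψ ≫ φ - 𝟙 (Δ' n)) ≫ f' n = 0
        rw [Preadditive.sub_comp, Category.assoc, Category.id_comp, ← hφ, ← hψ, sub_self]
      · exact fun e => F1' n (Z' n) (hZ' n) (-1) e
    exact ⟨⟨φ, ψ, hφψ, hψφ⟩⟩
  · refine ⟨?_, ?_, ?_⟩
    · -- Hom^•(Δ i, Δ j) = 0 for i > j
      intro i j hij n φ
      have hji : j < i := hij
      have hV := aux_vanishFrom_sub (Δ i)
      have hZj : (Z j : D) ∈ G i := hGmono hji.le (hZ j)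
      have hmem : Δ j ∈ {X | ∀ m : ℤ, ∀ f : Δ i ⟶ (X⟦m⟧ : D), f = 0} := by
        apply hV.ext_mem _ (inv_rot_of_distTriang _ (hT j))
        · exact hV.shift_mem (Z j) (-1) (F1 i (Z j) hZj)
        · exact fun m e => hdual₁ i j hji m e
      exact hmem n φ
    · -- Hom^n(Δ i, Δ i) = 0 for n ≠ 0
      intro i n hn φ
      -- Step 1: any map Δ i ⟶ E i⟦n⟧ vanishes
      have step1 : ∀ u : Δ i ⟶ ((E i)⟦n⟧ : D), u = 0 := by
        intro u
        obtain ⟨v, hv⟩ := aux_factor _ (hT i) u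
          (fun e => F2 i _ ((hGsub i).shift_mem (Z i) (-1) (hZ i)) n e)
        rw [hv, hE2 i n hn v]; exact comp_zero
      -- Step 2: use the shifted triangle
      apply aux_cancel _ (Triangle.shift_distinguished _ (hT i) n) φ
      · -- φ ≫ (shifted mor₁) = 0
        show φ ≫ (n.negOnePow • ((f i)⟦n⟧' : (Δ i)⟦n⟧ ⟶ (E i)⟦n⟧)) = 0
        rw [Linear.comp_units_smul, step1 (φ ≫ (f i)⟦n⟧'), smul_zero]
      · exact fun e => F1 i _ ((hGsub i).shift_mem (Z i) n (hZ i)) (-1) e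
    · -- End (Δ i) = k
      intro i φ
      obtain ⟨v, hv⟩ := aux_factor _ (hT i) (φ ≫ f i)
        (fun e => aux_zero_of_vanish
          (F2 i _ ((hGsub i).shift_mem (Z i) (-1) (hZ i))) e)
      change E i ⟶ E i at v
      change φ ≫ f i = f i ≫ v at hv
      obtain ⟨c, hc⟩ := hE3 i v
      refine ⟨c, ?_⟩
      rw [← sub_eq_zero]
      apply aux_cancel _ (hT i)
      · show (φ - c • 𝟙 (Δ i)) ≫ f i = 0
        rw [Preadditive.sub_comp, hv, hc]
        simp
      · exact fun e => F1 i (Z i) (hZ i) (-1) e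
end
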